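/- Suppose h0,h1,h2,h3 ∈ C[y1,...,yd] satisfy h0·h3 = h1·h2 and gcd(h0,h1,h2,h3) = 1, and not all hi are zero. Then there exist polynomials f1,f2,f3,f4 with gcd(f1,f2) = 1 and gcd(f3,f4) = 1 such that h0 = f2f3, h1 = f1f3, h2 = f2f4, h3 = f1f4. -/

import Mathlib

open MvPolynomial

/-- If h0h3 = h1h2, gcd(h0,h1,h2,h3) = 1 and not all hi are zero, then
there exist f1,f2,f3,f4 with gcd(f1,f2) = gcd(f3,f4) = 1 and
h0 = f2f3, h1 = f1f3, h2 = f2f4, h3 = f1f4. -/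
theorem quadric_universal_param (d : ℕ) (h0 h1 h2 h3 : MvPolynomial (Fin d) ℂ)
    (heq : h0 * h3 = h1 * h2)
    (hgcd : ∀ z : MvPolynomial (Fin d) ℂ, z ∣ h0 → z ∣ h1 → z ∣ h2 → z ∣ h3 → IsUnit z)
    (hne : ¬ (h0 = 0 ∧ h1 = 0 ∧ h2 = 0 ∧ h3 = 0)) :
    ∃ f1 f2 f3 f4 : MvPolynomial (Fin d) ℂ,
      IsRelPrime f1 f2 ∧ IsRelPrime f3 f4 ∧
      h0 = f2 * f3 ∧ h1 = f1 * f3 ∧ h2 = f2 * f4 ∧ h3 = f1 * f4 := by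
  classical
  by_cases h01 : h0 = 0 ∧ h1 = 0
  · obtain ⟨e0, e1⟩ := h01
    refine ⟨h3, h2, 0, 1, ?_, ?_, by simp [e0], by simp [e1], by ring, by ring⟩
    · intro z hz3 hz2
      exact hgcd z (e0 ▸ dvd_zero z) (e1 ▸ dvd_zero z) hz2 hz3
    · intro z _ hz; exact isUnit_of_dvd_one hz
  · letI : NormalizationMonoid (MvPolynomial (Fin d) ℂ) :=
      (UniqueFactorizationMonoid.normalizationMonoid :
        StrongNormalizationMonoid (MvPolynomial (Fin d) ℂ)).toNormalizationMonoid
    letI : GCDMonoid (MvPolynomial (Fin d) ℂ) :=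
      UniqueFactorizationMonoid.toGCDMonoid _
    set f3 := gcd h0 h1 with hf3def
    have hf3ne : f3 ≠ 0 := fun h => h01 ((gcd_eq_zero_iff h0 h1).mp h)
    obtain ⟨f2, hf2⟩ : f3 ∣ h0 := gcd_dvd_left h0 h1
    obtain ⟨f1, hf1⟩ : f3 ∣ h1 := gcd_dvd_right h0 h1
    have hcop : IsRelPrime f1 f2 := by
      intro z hz1 hz2
      have hd0 : f3 * z ∣ h0 := hf2 ▸ mul_dvd_mul_left f3 hz2
      have hd1 : f3 * z ∣ h1 := hf1 ▸ mul_dvd_mul_left f3 hz1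
      have hzz : f3 * z ∣ f3 * 1 := by simpa using dvd_gcd hd0 hd1
      exact isUnit_of_dvd_one ((mul_dvd_mul_iff_left hf3ne).mp hzz)
    have key : f2 * h3 = f1 * h2 := by
      refine mul_left_cancel₀ hf3ne ?_
      rw [← mul_assoc, ← mul_assoc, ← hf2, ← hf1]; exact heq
    have hmain : ∃ f4, h2 = f2 * f4 ∧ h3 = f1 * f4 := by
      by_cases hf1z : f1 = 0
      · have hf2u : IsUnit f2 := hcop (hf1z ▸ dvd_zero f2) dvd_rfl
        obtain ⟨u, hu⟩ := hf2u
        have hf2ne : f2 ≠ 0 := hu ▸ u.ne_zero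
        have h3z : h3 = 0 := by
          have : f2 * h3 = f2 * 0 := by rw [key, hf1z, zero_mul, mul_zero]
          exact mul_left_cancel₀ hf2ne this
        refine ⟨(↑u⁻¹ : _) * h2, ?_, by rw [hf1z, zero_mul, h3z]⟩
        rw [← hu, ← mul_assoc, Units.mul_inv, one_mul]
      · have hdvd : f1 ∣ f2 * h3 := key ▸ dvd_mul_right f1 h2
        obtain ⟨f4, hf4⟩ : f1 ∣ h3 := hcop.dvd_of_dvd_mul_left hdvd
        refine ⟨f4, ?_, hf4⟩
        refine mul_left_cancel₀ hf1z ?_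
        rw [← key, hf4]; ring
    obtain ⟨f4, hh2, hh3⟩ := hmain
    refine ⟨f1, f2, f3, f4, hcop, ?_, by rw [hf2, mul_comm], by rw [hf1, mul_comm],
      hh2, hh3⟩
    intro z hz3 hz4
    exact hgcd z (hz3.trans ⟨f2, hf2⟩) (hz3.trans ⟨f1, hf1⟩)
      (hz4.trans (Dvd.intro_left f2 hh2.symm)) (hz4.trans (Dvd.intro_left f1 hh3.symm))
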